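/- Let X_1,...,X_n be independent real-valued random variables with |X_i − E(X_i)| ≤ L for all i, and let X = ∑ X_i. Then for any δ > 0, P(X ≥ E(X) + δ) ≤ exp(−(δ²/2)/(∑ Var(X_i) + Lδ/3)). -/

import Mathlib

open MeasureTheory ProbabilityTheory

private lemma two_mul_three_pow_le_factorial (k : ℕ) : 2 * 3 ^ k ≤ (k + 2).factorial := by
  induction k with
  | zero => simp [Nat.factorial]
  | succ k ih =>
    have h : (k + 3).factorial = (k + 3) * (k + 2).factorial := rfl
    calc 2 * 3 ^ (k + 1) = 3 * (2 * 3 ^ k) := by ring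
    _ ≤ 3 * (k + 2).factorial := Nat.mul_le_mul_left 3 ih
    _ ≤ (k + 3) * (k + 2).factorial := Nat.mul_le_mul_right _ (by omega)
    _ = (k + 1 + 2).factorial := by rw [← h]

set_option maxHeartbeats 2000000 in
/-- Elementary series bound: if `|x| ≤ 3 c` with `c < 1`, then
`exp x ≤ 1 + x + x² / (2 (1 - c))`. -/
private lemma exp_le_quadratic {x c : ℝ} (hc : c < 1) (hx : |x| ≤ 3 * c) :
    Real.exp x ≤ 1 + x + x ^ 2 / (2 * (1 - c)) := by
  have hc0 : 0 ≤ c := by nlinarith [abs_nonneg x]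
  have hsum : Summable (fun n : ℕ => x ^ n / n.factorial) :=
    Real.summable_pow_div_factorial x
  have hsum1 : Summable (fun n : ℕ => x ^ (n + 1) / (n + 1).factorial) :=
    (summable_nat_add_iff 1).mpr hsum
  have hsum2 : Summable (fun n : ℕ => x ^ (n + 1 + 1) / (n + 1 + 1).factorial) :=
    (summable_nat_add_iff 1).mpr hsum1
  have hexp : Real.exp x = ∑' n : ℕ, x ^ n / n.factorial := by
    rw [Real.exp_eq_exp_ℝ, NormedSpace.exp_eq_tsum_div]
  have key : ∀ k : ℕ, x ^ (k + 2) / ((k + 2).factorial : ℝ) ≤ x ^ 2 / 2 * c ^ k := by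
    intro k
    have hfpos : (0 : ℝ) < ((k + 2).factorial : ℝ) := by positivity
    have h2 : (2 * 3 ^ k : ℝ) ≤ ((k + 2).factorial : ℝ) := by
      exact_mod_cast two_mul_three_pow_le_factorial k
    have h1 : x ^ (k + 2) ≤ x ^ 2 * (3 * c) ^ k := by
      calc x ^ (k + 2) ≤ |x ^ (k + 2)| := le_abs_self _
      _ = x ^ 2 * |x| ^ k := by
          rw [abs_pow, pow_add, sq_abs]; ring
      _ ≤ x ^ 2 * (3 * c) ^ k :=
          mul_le_mul_of_nonneg_left (pow_le_pow_left₀ (abs_nonneg x) hx k) (sq_nonneg x)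
    rw [div_le_iff₀ hfpos]
    calc x ^ (k + 2) ≤ x ^ 2 * (3 * c) ^ k := h1
    _ = x ^ 2 / 2 * c ^ k * (2 * 3 ^ k) := by rw [mul_pow]; ring
    _ ≤ x ^ 2 / 2 * c ^ k * ((k + 2).factorial : ℝ) := by
        have hnn : 0 ≤ x ^ 2 / 2 * c ^ k := by positivity
        exact mul_le_mul_of_nonneg_left h2 hnn
  have hgeo : Summable (fun k : ℕ => x ^ 2 / 2 * c ^ k) :=
    (summable_geometric_of_lt_one hc0 hc).mul_left _
  have htail : (∑' k : ℕ, x ^ (k + 1 + 1) / ((k + 1 + 1).factorial : ℝ))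
      ≤ x ^ 2 / (2 * (1 - c)) := by
    have h1 : (∑' k : ℕ, x ^ (k + 1 + 1) / ((k + 1 + 1).factorial : ℝ))
        ≤ ∑' k : ℕ, x ^ 2 / 2 * c ^ k := by
      refine Summable.tsum_le_tsum (fun k => ?_) hsum2 hgeo
      simpa using key k
    have h2 : (∑' k : ℕ, x ^ 2 / 2 * c ^ k) = x ^ 2 / 2 * (1 - c)⁻¹ := by
      rw [tsum_mul_left, tsum_geometric_of_lt_one hc0 hc]
    rw [h2] at h1
    have h1c : (1 : ℝ) - c ≠ 0 := ne_of_gt (by linarith)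
    refine h1.trans (le_of_eq ?_)
    field_simp
  calc Real.exp x = ∑' n : ℕ, x ^ n / n.factorial := hexp
  _ = x ^ 0 / (0 : ℕ).factorial +
      (x ^ (0 + 1) / (0 + 1 : ℕ).factorial +
        ∑' k : ℕ, x ^ (k + 1 + 1) / ((k + 1 + 1).factorial : ℝ)) := by
      rw [Summable.tsum_eq_zero_add hsum, Summable.tsum_eq_zero_add hsum1]
  _ = 1 + x + ∑' k : ℕ, x ^ (k + 1 + 1) / ((k + 1 + 1).factorial : ℝ) := by
      norm_num; ring
  _ ≤ 1 + x + x ^ 2 / (2 * (1 - c)) := by linarith [htail]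

/-- MGF bound for a centered, a.s. bounded random variable. -/
private lemma mgf_le_of_bounded {Ω : Type*} [MeasurableSpace Ω] {μ : Measure Ω}
    [IsProbabilityMeasure μ] {Y : Ω → ℝ} (hYm : Measurable Y) {L t : ℝ}
    (hL : 0 ≤ L) (ht : 0 ≤ t) (hbound : ∀ᵐ ω ∂μ, |Y ω| ≤ L)
    (hmean : ∫ ω, Y ω ∂μ = 0) (hc : t * L / 3 < 1) :
    mgf Y μ t ≤ Real.exp (t ^ 2 * (∫ ω, Y ω ^ 2 ∂μ) / (2 * (1 - t * L / 3))) := by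
  have hden : 0 < 1 - t * L / 3 := by linarith
  have hY : Integrable Y μ := by
    refine Integrable.mono' (integrable_const L) hYm.aestronglyMeasurable ?_
    filter_upwards [hbound] with ω h using by simpa using h
  have hY2 : Integrable (fun ω => Y ω ^ 2) μ := by
    refine Integrable.mono' (integrable_const (L ^ 2)) (hYm.pow_const 2).aestronglyMeasurable ?_
    filter_upwards [hbound] with ω h
    rw [Real.norm_eq_abs, abs_pow]
    exact pow_le_pow_left₀ (abs_nonneg _) h 2
  have hexpint : Integrable (fun ω => Real.exp (t * Y ω)) μ := by
    refine Integrable.mono' (integrable_const (Real.exp (t * L)))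
      ((hYm.const_mul t).exp).aestronglyMeasurable ?_
    filter_upwards [hbound] with ω h
    rw [Real.norm_eq_abs, abs_of_pos (Real.exp_pos _), Real.exp_le_exp]
    have := le_of_abs_le h
    nlinarith [abs_le.mp h]
  have hptwise : ∀ᵐ ω ∂μ, Real.exp (t * Y ω) ≤
      1 + t * Y ω + t ^ 2 / (2 * (1 - t * L / 3)) * Y ω ^ 2 := by
    filter_upwards [hbound] with ω h
    have hx : |t * Y ω| ≤ 3 * (t * L / 3) := by
      rw [abs_mul, abs_of_nonneg ht]
      have : t * |Y ω| ≤ t * L := mul_le_mul_of_nonneg_left h ht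
      linarith
    have := exp_le_quadratic hc hx
    calc Real.exp (t * Y ω) ≤ 1 + t * Y ω + (t * Y ω) ^ 2 / (2 * (1 - t * L / 3)) := this
    _ = 1 + t * Y ω + t ^ 2 / (2 * (1 - t * L / 3)) * Y ω ^ 2 := by ring
  have hint_rhs : Integrable
      (fun ω => 1 + t * Y ω + t ^ 2 / (2 * (1 - t * L / 3)) * Y ω ^ 2) μ :=
    ((integrable_const 1).add (hY.const_mul t)).add (hY2.const_mul _)
  have hle : mgf Y μ t ≤
      ∫ ω, (1 + t * Y ω + t ^ 2 / (2 * (1 - t * L / 3)) * Y ω ^ 2) ∂μ :=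
    integral_mono_ae hexpint hint_rhs hptwise
  have hg1 : Integrable (fun _ : Ω => (1 : ℝ)) μ := integrable_const 1
  have hg2 : Integrable (fun ω => t * Y ω) μ := hY.const_mul t
  have hg12 : Integrable (fun ω => 1 + t * Y ω) μ := hg1.add hg2
  have hg3 : Integrable (fun ω => t ^ 2 / (2 * (1 - t * L / 3)) * Y ω ^ 2) μ :=
    hY2.const_mul _
  have heq : ∫ ω, (1 + t * Y ω + t ^ 2 / (2 * (1 - t * L / 3)) * Y ω ^ 2) ∂μ
      = 1 + t ^ 2 * (∫ ω, Y ω ^ 2 ∂μ) / (2 * (1 - t * L / 3)) := by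
    rw [integral_add hg12 hg3, integral_add hg1 hg2, integral_const,
      integral_const_mul, integral_const_mul, hmean]
    simp [measure_univ]
    ring
  rw [heq] at hle
  refine hle.trans ?_
  have := Real.add_one_le_exp (t ^ 2 * (∫ ω, Y ω ^ 2 ∂μ) / (2 * (1 - t * L / 3)))
  linarith

/-- Bernstein's inequality: if `X_1, …, X_n` are independent with
`|X_i − E X_i| ≤ L` a.s., then for `δ > 0`,
`P(X ≥ E X + δ) ≤ exp(−(δ²/2)/(∑ Var X_i + Lδ/3))`. -/
theorem bernstein_inequality {Ω : Type*} [MeasurableSpace Ω] (μ : Measure Ω)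
    [IsProbabilityMeasure μ] (n : ℕ) (X : Fin n → Ω → ℝ)
    (hmeas : ∀ i, Measurable (X i))
    (hint : ∀ i, Integrable (X i) μ)
    (hindep : iIndepFun X μ)
    (L : ℝ) (hL : 0 ≤ L)
    (hbound : ∀ i, ∀ᵐ ω ∂μ, |X i ω - ∫ ω', X i ω' ∂μ| ≤ L)
    (δ : ℝ) (hδ : 0 < δ) :
    μ {ω | (∑ i, ∫ ω', X i ω' ∂μ) + δ ≤ ∑ i, X i ω} ≤
      ENNReal.ofReal
        (Real.exp (-(δ ^ 2 / 2) / ((∑ i, variance (X i) μ) + L * δ / 3))) := by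
  set m : Fin n → ℝ := fun i => ∫ ω', X i ω' ∂μ with hm
  set Y : Fin n → Ω → ℝ := fun i ω => X i ω - m i with hY
  set V : ℝ := ∑ i, variance (X i) μ with hVdef
  have hYm : ∀ i, Measurable (Y i) := fun i => (hmeas i).sub measurable_const
  have hYbound : ∀ i, ∀ᵐ ω ∂μ, |Y i ω| ≤ L := hbound
  have hYint : ∀ i, Integrable (Y i) μ := fun i => (hint i).sub (integrable_const _)
  have hYmean : ∀ i, ∫ ω, Y i ω ∂μ = 0 := by
    intro i
    rw [hY]
    rw [integral_sub (hint i) (integrable_const _), integral_const]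
    simp [hm]
  have hY2 : ∀ i, Integrable (fun ω => Y i ω ^ 2) μ := by
    intro i
    refine Integrable.mono' (integrable_const (L ^ 2))
      ((hYm i).pow_const 2).aestronglyMeasurable ?_
    filter_upwards [hYbound i] with ω h
    rw [Real.norm_eq_abs, abs_pow]
    exact pow_le_pow_left₀ (abs_nonneg _) h 2
  have hmem2 : ∀ i, MemLp (X i) 2 μ := by
    intro i
    refine (memLp_top_of_bound (hmeas i).aestronglyMeasurable (L + |m i|) ?_).mono_exponent
      le_top
    filter_upwards [hYbound i] with ω h
    rw [Real.norm_eq_abs]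
    have : |X i ω| = |Y i ω + m i| := by rw [hY]; ring_nf
    rw [this]
    calc |Y i ω + m i| ≤ |Y i ω| + |m i| := abs_add_le _ _
    _ ≤ L + |m i| := by linarith
  have hvar : ∀ i, variance (X i) μ = ∫ ω, Y i ω ^ 2 ∂μ := by
    intro i
    rw [variance_eq_integral (hmeas i).aemeasurable]
  have hset : {ω | (∑ i, ∫ ω', X i ω' ∂μ) + δ ≤ ∑ i, X i ω}
      = {ω | δ ≤ (∑ i, Y i) ω} := by
    ext ω
    simp only [Set.mem_setOf_eq, Finset.sum_apply, hY]
    rw [Finset.sum_sub_distrib]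
    constructor <;> intro h <;> [skip; skip] <;> · simp only [hm] at * ; linarith
  rw [hset]
  by_cases hV : V = 0
  · -- degenerate case: all variances zero, so the sum is a.s. equal to its mean
    have hvz : ∀ i, ∀ᵐ ω ∂μ, Y i ω = 0 := by
      intro i
      have hvi : variance (X i) μ = 0 := by
        have hnn : ∀ j ∈ Finset.univ, (0:ℝ) ≤ variance (X j) μ :=
          fun j _ => variance_nonneg _ _
        exact (Finset.sum_eq_zero_iff_of_nonneg hnn).mp hV i (Finset.mem_univ i)
      have h0 : ∫ ω, Y i ω ^ 2 ∂μ = 0 := by rw [← hvar i, hvi]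
      have := (integral_eq_zero_iff_of_nonneg (fun ω => sq_nonneg (Y i ω)) (hY2 i)).mp h0
      filter_upwards [this] with ω h
      exact pow_eq_zero_iff (by norm_num) |>.mp h
    have hsum0 : ∀ᵐ ω ∂μ, (∑ i, Y i) ω = 0 := by
      have := (ae_all_iff).mpr hvz
      filter_upwards [this] with ω h
      simp [Finset.sum_apply, h]
    have hnull : μ {ω | δ ≤ (∑ i, Y i) ω} = 0 := by
      refine measure_mono_null ?_ (ae_iff.mp hsum0)
      intro ω hω
      simp only [Set.mem_setOf_eq] at hω ⊢
      intro h0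
      rw [h0] at hω
      linarith
    rw [hnull]
    exact zero_le
  · have hV0 : 0 < V := lt_of_le_of_ne
      (Finset.sum_nonneg fun i _ => variance_nonneg _ _) (Ne.symm hV)
    set D : ℝ := V + L * δ / 3 with hD
    have hD0 : 0 < D := by positivity
    set t : ℝ := δ / D with htdef
    have ht0 : 0 < t := div_pos hδ hD0
    have hc : t * L / 3 < 1 := by
      have h1 : δ * L < 3 * D := by rw [hD]; nlinarith [hV0, hδ, hL]
      rw [div_lt_one (by norm_num : (0:ℝ) < 3), htdef, div_mul_eq_mul_div, div_lt_iff₀ hD0]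
      linarith
    have hYindep : iIndepFun Y μ := by
      have := hindep.comp (fun i => fun x => x - m i)
        (fun i => measurable_id.sub measurable_const)
      exact this
    have hexpint : ∀ i, Integrable (fun ω => Real.exp (t * Y i ω)) μ := by
      intro i
      refine Integrable.mono' (integrable_const (Real.exp (t * L)))
        (((hYm i).const_mul t).exp).aestronglyMeasurable ?_
      filter_upwards [hYbound i] with ω h
      rw [Real.norm_eq_abs, abs_of_pos (Real.exp_pos _), Real.exp_le_exp]
      nlinarith [abs_le.mp h]
    have hsumint : Integrable (fun ω => Real.exp (t * (∑ i, Y i) ω)) μ :=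
      hYindep.integrable_exp_mul_sum hYm (fun i _ => hexpint i)
    have hchern := measure_ge_le_exp_mul_mgf (μ := μ) (X := ∑ i, Y i) δ ht0.le hsumint
    have hmgf : mgf (∑ i, Y i) μ t ≤ Real.exp (t ^ 2 * V / (2 * (1 - t * L / 3))) := by
      rw [hYindep.mgf_sum hYm Finset.univ]
      calc (∏ i, mgf (Y i) μ t)
          ≤ ∏ i, Real.exp (t ^ 2 * (∫ ω, Y i ω ^ 2 ∂μ) / (2 * (1 - t * L / 3))) := by
            refine Finset.prod_le_prod (fun i _ => mgf_nonneg) (fun i _ => ?_)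
            exact mgf_le_of_bounded (hYm i) hL ht0.le (hYbound i) (hYmean i) hc
      _ = Real.exp (∑ i, t ^ 2 * (∫ ω, Y i ω ^ 2 ∂μ) / (2 * (1 - t * L / 3))) := by
            rw [Real.exp_sum]
      _ = Real.exp (t ^ 2 * V / (2 * (1 - t * L / 3))) := by
            congr 1
            rw [hVdef]
            rw [← Finset.sum_div, ← Finset.mul_sum]
            congr 2
            exact Finset.sum_congr rfl fun i _ => (hvar i).symm
    have hfinal : Real.exp (-t * δ) * mgf (∑ i, Y i) μ t ≤
        Real.exp (-(δ ^ 2 / 2) / D) := by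
      have h1 : Real.exp (-t * δ) * mgf (∑ i, Y i) μ t ≤
          Real.exp (-t * δ) * Real.exp (t ^ 2 * V / (2 * (1 - t * L / 3))) :=
        mul_le_mul_of_nonneg_left hmgf (Real.exp_pos _).le
      rw [← Real.exp_add] at h1
      refine h1.trans (le_of_eq ?_)
      congr 1
      have hcc : 1 - t * L / 3 = V / D := by
        rw [htdef, hD]
        field_simp
        ring
      rw [hcc, htdef]
      field_simp
      ring
    have hne : μ {ω | δ ≤ (∑ i, Y i) ω} ≠ ⊤ := measure_ne_top _ _
    rw [← ENNReal.ofReal_toReal hne]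
    refine ENNReal.ofReal_le_ofReal ?_
    calc (μ {ω | δ ≤ (∑ i, Y i) ω}).toReal
        ≤ Real.exp (-t * δ) * mgf (∑ i, Y i) μ t := hchern
    _ ≤ Real.exp (-(δ ^ 2 / 2) / D) := hfinal
    _ = Real.exp (-(δ ^ 2 / 2) / ((∑ i, variance (X i) μ) + L * δ / 3)) := by rw [hD, hVdef]
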